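/- arXiv:1509.05458 — 3 statements merged into one kernel-verified Lean document; each statement's English description precedes it below -/
import Mathlib

section
/- Let L be a Moufang loop with a central subloop Z of order 2 such that every square, every commutator [x,y], and every associator [x,y,z] of L lies in Z. Then for all x, y ∈ L: (x*y)*(x*y) = ((x*x)*(y*y))*[x,y]. -/
/-- `a` lies in the center of the loop `L`. -/
def Central {L : Type*} [Mul L] (a : L) : Prop :=
  (∀ y : L, a * y = y * a) ∧
  (∀ y z : L, a * (y * z) = (a * y) * z) ∧
  (∀ y z : L, y * (a * z) = (y * a) * z) ∧
  (∀ y z : L, y * (z * a) = (y * z) * a)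

theorem square_of_product
    (L : Type*) [Mul L] [One L]
    (hl : ∀ a b : L, ∃! x : L, a * x = b)
    (hr : ∀ a b : L, ∃! y : L, y * a = b)
    (hid : ∀ x : L, 1 * x = x ∧ x * 1 = x)
    (hmo : ∀ x y z : L, (x * y) * (z * x) = (x * (y * z)) * x)
    (comm : L → L → L) (hcomm : ∀ x y : L, x * y = (y * x) * comm x y)
    (assoc : L → L → L → L)
    (hassoc : ∀ x y z : L, (x * y) * z = (x * (y * z)) * assoc x y z)
    (Z : Set L)
    (hZ1 : (1 : L) ∈ Z)
    (hZmul : ∀ a ∈ Z, ∀ b ∈ Z, a * b ∈ Z)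
    (hZcentral : ∀ n ∈ Z, Central n)
    (hZcard : Z.ncard = 2)
    (hsq : ∀ x : L, x * x ∈ Z)
    (hc : ∀ x y : L, comm x y ∈ Z)
    (ha : ∀ x y z : L, assoc x y z ∈ Z) :
    ∀ x y : L, (x * y) * (x * y) = ((x * x) * (y * y)) * comm x y := by
  intro x y
  obtain ⟨hc1, hc2, hc3, hc4⟩ := hZcentral _ (hc x y)
  obtain ⟨hy1, hy2, hy3, hy4⟩ := hZcentral _ (hsq y)
  obtain ⟨hx1, _⟩ := hZcentral _ (hsq x)
  calc (x * y) * (x * y) = (x * y) * ((y * x) * comm x y) := by rw [← hcomm]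
    _ = ((x * y) * (y * x)) * comm x y := hc4 _ _
    _ = ((x * (y * y)) * x) * comm x y := by rw [hmo]
    _ = (((y * y) * x) * x) * comm x y := by rw [← hy1]
    _ = ((y * y) * (x * x)) * comm x y := by rw [← hy2]
    _ = ((x * x) * (y * y)) * comm x y := by rw [← hx1]
end

section
/- Let L be a Moufang loop with a central subloop Z of order 2 such that every square, every commutator [x,y], and every associator [x,y,z] of L lies in Z. Then for all x, y, z ∈ L: [x*y, z] = ([x,z]*[y,z])*[x,y,z]. -/
theorem comm_of_product
    (L : Type*) [Mul L] [One L]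
    (hl : ∀ a b : L, ∃! x : L, a * x = b)
    (hr : ∀ a b : L, ∃! y : L, y * a = b)
    (hid : ∀ x : L, 1 * x = x ∧ x * 1 = x)
    (hmo : ∀ x y z : L, (x * y) * (z * x) = (x * (y * z)) * x)
    (comm : L → L → L) (hcomm : ∀ x y : L, x * y = (y * x) * comm x y)
    (assoc : L → L → L → L)
    (hassoc : ∀ x y z : L, (x * y) * z = (x * (y * z)) * assoc x y z)
    (Z : Set L)
    (hZ1 : (1 : L) ∈ Z)
    (hZmul : ∀ a ∈ Z, ∀ b ∈ Z, a * b ∈ Z)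
    (hZcentral : ∀ n ∈ Z, Central n)
    (hZcard : Z.ncard = 2)
    (hsq : ∀ x : L, x * x ∈ Z)
    (hc : ∀ x y : L, comm x y ∈ Z)
    (ha : ∀ x y z : L, assoc x y z ∈ Z) :
    ∀ x y z : L, comm (x * y) z = (comm x z * comm y z) * assoc x y z := by
  have mul_one' : ∀ m : L, m * 1 = m := fun m => (hid m).2
  have lcancel : ∀ a m n : L, a * m = a * n → m = n := by
    intro a m n h
    obtain ⟨w, -, hu⟩ := hl a (a * n)
    exact (hu m h).trans (hu n rfl).symm
  have rcancel : ∀ a m n : L, m * a = n * a → m = n := by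
    intro a m n h
    obtain ⟨w, -, hu⟩ := hr a (n * a)
    exact (hu m h).trans (hu n rfl).symm
  have unit_of : ∀ m v : L, m * v = m → v = 1 := by
    intro m v h
    exact lcancel m v 1 (by rw [mul_one']; exact h)
  have hc1 : ∀ n ∈ Z, ∀ y : L, n * y = y * n := fun n hn => (hZcentral n hn).1
  have hc2 : ∀ n ∈ Z, ∀ y z : L, n * (y * z) = (n * y) * z := fun n hn => (hZcentral n hn).2.1
  have hc3 : ∀ n ∈ Z, ∀ y z : L, y * (n * z) = (y * n) * z := fun n hn => (hZcentral n hn).2.2.1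
  have hc4 : ∀ n ∈ Z, ∀ y z : L, y * (z * n) = (y * z) * n := fun n hn => (hZcentral n hn).2.2.2
  have mv1 : ∀ n ∈ Z, ∀ a b : L, (a * n) * b = (a * b) * n := by
    intro n hn a b
    rw [← hc3 n hn a b, hc1 n hn b, hc4 n hn a b]
  have zsq : ∀ n ∈ Z, n * n = 1 := by
    intro n hn
    by_cases h1 : n = 1
    · rw [h1, mul_one']
    · have hfin : Z.Finite := Set.finite_of_ncard_ne_zero (by rw [hZcard]; omega)
      have hsub : ({1, n} : Set L) ⊆ Z := by
        intro t ht
        rcases ht with h | h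
        · rw [h]; exact hZ1
        · rw [Set.mem_singleton_iff] at h; rw [h]; exact hn
      have hpair : ({1, n} : Set L).ncard = 2 := Set.ncard_pair (Ne.symm h1)
      have heq : ({1, n} : Set L) = Z :=
        Set.eq_of_subset_of_ncard_le hsub (by rw [hZcard, hpair]) hfin
      have hnn : n * n ∈ ({1, n} : Set L) := by rw [heq]; exact hZmul n hn n hn
      rcases hnn with h | h
      · exact h
      · rw [Set.mem_singleton_iff] at h
        exact absurd (unit_of n n h) h1
  have cancel_inv : ∀ n ∈ Z, ∀ m : L, (m * n) * n = m := by
    intro n hn m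
    rw [← hc4 n hn m n, zsq n hn, mul_one']
  have flip : ∀ n ∈ Z, ∀ p q : L, p = q * n → q = p * n := by
    intro n hn p q h
    rw [h, cancel_inv n hn q]
  have assocR : ∀ n ∈ Z, ∀ m k : L, (m * n) * k = m * (n * k) :=
    fun n hn m k => (hc3 n hn m k).symm
  -- associator with a central first argument is trivial
  have aZ1 : ∀ n ∈ Z, ∀ u w : L, assoc n u w = 1 := by
    intro n hn u w
    have h := hassoc n u w
    rw [← hc2 n hn u w] at h
    exact unit_of _ _ h.symm
  -- Moufang consequence: assoc (x*y) z x = assoc x y z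
  have M2 : ∀ x y z : L, assoc (x * y) z x = assoc x y z := by
    intro x y z
    have h1 := hassoc (x * y) z x
    rw [hmo x y z] at h1
    have h2 : ((x * y) * z) * x = ((x * (y * z)) * x) * assoc x y z := by
      rw [hassoc x y z, mv1 (assoc x y z) (ha x y z) (x * (y * z)) x]
    exact (lcancel _ _ _ (h2.symm.trans h1)).symm
  have M5 : ∀ x r : L, assoc x x r = 1 := by
    intro x r
    rw [← M2 x x r]
    exact aZ1 (x * x) (hsq x) r x
  have leftalt : ∀ x u : L, x * (x * u) = (x * x) * u := by
    intro x u
    rw [hassoc x x u, M5, mul_one']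
  have ainv2 : ∀ n ∈ Z, ∀ x u w : L, assoc x (u * n) w = assoc x u w := by
    intro n hn x u w
    have h1 : (x * (u * n)) * w = ((x * (u * w)) * assoc x u w) * n := by
      rw [hc4 n hn x u, mv1 n hn (x * u) w, hassoc x u w]
    have h2 : (x * (u * n)) * w = ((x * (u * w)) * assoc x (u * n) w) * n := by
      rw [hassoc x (u * n) w, mv1 n hn u w, hc4 n hn x (u * w),
        mv1 n hn (x * (u * w)) (assoc x (u * n) w)]
    have h3 := rcancel n _ _ (h1.symm.trans h2)
    exact (lcancel _ _ _ h3).symm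
  have ldiv : ∀ x u : L, x * ((x * u) * (x * x)) = u := by
    intro x u
    rw [hc4 (x * x) (hsq x) x (x * u), leftalt x u, hc1 (x * x) (hsq x) u,
      cancel_inv (x * x) (hsq x) u]
  have M2' : ∀ u r p : L, assoc u r p = assoc p (p * u) r := by
    intro u r p
    have h := M2 p ((p * u) * (p * p)) r
    rw [ldiv p u] at h
    rw [h]
    exact ainv2 (p * p) (hsq p) p (p * u) r
  have M10 : ∀ x z w : L, assoc x (x * z) w = assoc x z w := by
    intro x z w
    have hx2 := hsq x
    have route1 : (x * (x * z)) * w = (z * w) * (x * x) := by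
      rw [leftalt x z, ← hc2 (x * x) hx2 z w, hc1 (x * x) hx2 (z * w)]
    have route2 : (x * (x * z)) * w =
        (((z * w) * (x * x)) * assoc x z w) * assoc x (x * z) w := by
      rw [hassoc x (x * z) w, hassoc x z w, hc4 (assoc x z w) (ha x z w) x (x * (z * w)),
        leftalt x (z * w), hc1 (x * x) hx2 (z * w)]
    have h3 : (((z * w) * (x * x)) * assoc x z w) * assoc x z w = (z * w) * (x * x) :=
      cancel_inv (assoc x z w) (ha x z w) _
    have h := h3.trans (route1.symm.trans route2)
    exact (lcancel _ _ _ h).symm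
  have cyc : ∀ a b c : L, assoc a b c = assoc c a b := by
    intro a b c
    rw [M2' a b c, M10 c a b]
  -- the general expansion of comm (x*y) z
  have commProd : ∀ x y z : L,
      comm (x * y) z =
        (((assoc z x y * comm x z) * assoc x z y) * comm y z) * assoc x y z := by
    intro x y z
    have hA1 := ha x y z
    have hA2 := ha x z y
    have hA3 := ha z x y
    have hCm := hc x z
    have hD := hc y z
    have eflip : x * (z * y) = ((x * z) * y) * assoc x z y := flip _ hA2 _ _ (hassoc x z y)
    have chain : (x * y) * z =
        (((((z * (x * y)) * assoc z x y) * comm x z) * assoc x z y) * comm y z) *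
          assoc x y z := by
      rw [hassoc x y z, hcomm y z, hc4 (comm y z) hD x (z * y), eflip, hcomm x z,
        mv1 (comm x z) hCm (z * x) y, hassoc z x y]
    have chain2 : (x * y) * z =
        (z * (x * y)) *
          ((((assoc z x y * comm x z) * assoc x z y) * comm y z) * assoc x y z) := by
      rw [chain, assocR (assoc z x y) hA3, assocR _ (hZmul _ hA3 _ hCm),
        assocR _ (hZmul _ (hZmul _ hA3 _ hCm) _ hA2),
        assocR _ (hZmul _ (hZmul _ (hZmul _ hA3 _ hCm) _ hA2) _ hD)]
    have P1 : (z * (x * y)) * comm (x * y) z = (x * y) * z := (hcomm (x * y) z).symm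
    exact lcancel _ _ _ (P1.trans chain2)
  have commSwap : ∀ x y z : L, comm (x * y) z = comm (y * x) z := by
    intro x y z
    have hcxy := hc x y
    have e1 : (x * y) * z = ((z * (y * x)) * comm (y * x) z) * comm x y := by
      rw [hcomm x y, mv1 (comm x y) hcxy (y * x) z, hcomm (y * x) z]
    have e0 : z * (x * y) = (z * (y * x)) * comm x y := by
      rw [hcomm x y, hc4 (comm x y) hcxy z (y * x)]
    have e2 : (x * y) * z = ((z * (y * x)) * comm (x * y) z) * comm x y := by
      rw [hcomm (x * y) z, e0, mv1 (comm x y) hcxy (z * (y * x)) (comm (x * y) z)]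
    have h := rcancel (comm x y) _ _ (e1.symm.trans e2)
    exact (lcancel _ _ _ h).symm
  have Hc : ∀ u ∈ Z, ∀ v ∈ Z, ∀ w ∈ Z, ∀ t ∈ Z,
      (((u * v) * w) * t) * u = (v * t) * w := by
    intro u hu v hv w hw t ht
    rw [← hc2 u hu v w, ← hc2 u hu (v * w) t, hc1 u hu ((v * w) * t),
      cancel_inv u hu ((v * w) * t), ← hc3 w hw v t, hc1 w hw t, hc4 w hw v t]
  intro x y z
  have hA : assoc x y z ∈ Z := ha x y z
  have hB : assoc y x z ∈ Z := ha y x z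
  have hC : comm x z ∈ Z := hc x z
  have hD : comm y z ∈ Z := hc y z
  have e1 : comm (x * y) z = (comm x z * comm y z) * assoc y x z := by
    rw [commProd x y z, cyc z x y, cyc y z x, cyc x z y,
      Hc (assoc x y z) hA (comm x z) hC (assoc y x z) hB (comm y z) hD]
  have e2 : comm (y * x) z = (comm y z * comm x z) * assoc x y z := by
    rw [commProd y x z, cyc z y x, cyc x z y, cyc y z x,
      Hc (assoc y x z) hB (comm y z) hD (assoc x y z) hA (comm x z) hC]
  have e3 : (comm x z * comm y z) * assoc y x z = (comm y z * comm x z) * assoc x y z :=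
    e1.symm.trans ((commSwap x y z).trans e2)
  have e4 : comm y z * comm x z = comm x z * comm y z := hc1 (comm y z) hD (comm x z)
  rw [e4] at e3
  have e5 : assoc y x z = assoc x y z := lcancel _ _ _ e3
  rw [e1, e5]
end

section
/- Let L be a Moufang loop with a central subloop Z of order 2 such that every square, every commutator [x,y], and every associator [x,y,z] of L lies in Z. Then the associator is linear in each argument: for all x, w, y, z ∈ L, [x*w, y, z] = [x,y,z]*[w,y,z], [x, y*w, z] = [x,y,z]*[x,w,z], and [x, y, z*w] = [x,y,z]*[x,y,w]. -/
theorem assoc_trilinear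
    (L : Type*) [Mul L] [One L]
    (hl : ∀ a b : L, ∃! x : L, a * x = b)
    (hr : ∀ a b : L, ∃! y : L, y * a = b)
    (hid : ∀ x : L, 1 * x = x ∧ x * 1 = x)
    (hmo : ∀ x y z : L, (x * y) * (z * x) = (x * (y * z)) * x)
    (comm : L → L → L) (hcomm : ∀ x y : L, x * y = (y * x) * comm x y)
    (assoc : L → L → L → L)
    (hassoc : ∀ x y z : L, (x * y) * z = (x * (y * z)) * assoc x y z)
    (Z : Set L)
    (hZ1 : (1 : L) ∈ Z)
    (hZmul : ∀ a ∈ Z, ∀ b ∈ Z, a * b ∈ Z)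
    (hZcentral : ∀ n ∈ Z, Central n)
    (hZcard : Z.ncard = 2)
    (hsq : ∀ x : L, x * x ∈ Z)
    (hc : ∀ x y : L, comm x y ∈ Z)
    (ha : ∀ x y z : L, assoc x y z ∈ Z) :
    ∀ x w y z : L,
      assoc (x * w) y z = assoc x y z * assoc w y z ∧
      assoc x (y * w) z = assoc x y z * assoc x w z ∧
      assoc x y (z * w) = assoc x y z * assoc x y w := by
  -- basic one lemmas
  have hone1 : ∀ x : L, 1 * x = x := fun x => (hid x).1
  have hone2 : ∀ x : L, x * 1 = x := fun x => (hid x).2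
  -- cancellation
  have lcancel : ∀ a x y : L, a * x = a * y → x = y := by
    intro a x y h
    obtain ⟨u, _, huniq⟩ := hl a (a * y)
    exact (huniq x h).trans (huniq y rfl).symm
  have rcancel : ∀ a x y : L, x * a = y * a → x = y := by
    intro a x y h
    obtain ⟨u, _, huniq⟩ := hr a (y * a)
    exact (huniq x h).trans (huniq y rfl).symm
  -- central movement lemmas
  have zc : ∀ {n : L}, n ∈ Z → ∀ x : L, n * x = x * n := fun hn => (hZcentral _ hn).1
  have z2 : ∀ {n : L}, n ∈ Z → ∀ x y : L, x * (n * y) = (x * n) * y :=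
    fun hn => (hZcentral _ hn).2.2.1
  have z3 : ∀ {n : L}, n ∈ Z → ∀ x y : L, x * (y * n) = (x * y) * n :=
    fun hn => (hZcentral _ hn).2.2.2
  have m2 : ∀ {n : L}, n ∈ Z → ∀ x y : L, x * (y * n) = (x * y) * n := z3
  have m1 : ∀ {n : L}, n ∈ Z → ∀ x y : L, (x * n) * y = (x * y) * n := by
    intro n hn x y
    calc (x * n) * y = x * (n * y) := (z2 hn x y).symm
      _ = x * (y * n) := by rw [zc hn y]
      _ = (x * y) * n := z3 hn x y
  -- the two-element structure of Z
  obtain ⟨e, he, hne, hZ2⟩ :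
      ∃ e : L, e ∈ Z ∧ e ≠ 1 ∧ ∀ n ∈ Z, n = 1 ∨ n = e := by
    obtain ⟨A, B, hAB, hZeq⟩ := Set.ncard_eq_two.mp hZcard
    have h1m : (1 : L) ∈ ({A, B} : Set L) := hZeq ▸ hZ1
    rcases h1m with h1A | h1B
    · refine ⟨B, ?_, ?_, ?_⟩
      · rw [hZeq]; right; rfl
      · intro hB1; exact hAB (h1A.symm.trans hB1.symm ▸ rfl)
      · intro n hn
        rw [hZeq] at hn
        rcases hn with h | h
        · left; rw [h, ← h1A]
        · right; exact h
    · refine ⟨A, ?_, ?_, ?_⟩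
      · rw [hZeq]; left; rfl
      · intro hA1
        apply hAB
        rw [hA1, Set.mem_singleton_iff.mp h1B]
      · intro n hn
        rw [hZeq] at hn
        rcases hn with h | h
        · right; exact h
        · left; rw [Set.mem_singleton_iff.mp h, ← Set.mem_singleton_iff.mp h1B]
  have hee : e * e = 1 := by
    rcases hZ2 _ (hZmul e he e he) with h | h
    · exact h
    · exact absurd (lcancel e e 1 (h.trans (hone2 e).symm)) hne
  have zsq : ∀ n ∈ Z, n * n = 1 := by
    intro n hn
    rcases hZ2 n hn with h | h
    · rw [h, hone1]
    · rw [h, hee]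
  have zuv : ∀ u ∈ Z, ∀ v ∈ Z, u * v = 1 → u = v := by
    intro u hu v hv huv
    rcases hZ2 u hu with h | h <;> rcases hZ2 v hv with h' | h' <;> rw [h, h'] at huv ⊢
    · rw [hone1] at huv; exact huv.symm
    · rw [hone2] at huv; exact huv
  -- associator with a 1 argument
  have a1 : ∀ y z : L, assoc 1 y z = 1 := by
    intro y z
    have h := hassoc 1 y z
    rw [hone1 y, hone1 (y * z)] at h
    have h2 : (y * z) * 1 = (y * z) * assoc 1 y z := by rw [hone2]; exact h
    exact (lcancel _ _ _ h2).symm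
  have a2 : ∀ x z : L, assoc x 1 z = 1 := by
    intro x z
    have h := hassoc x 1 z
    rw [hone2 x, hone1 z] at h
    have h2 : (x * z) * 1 = (x * z) * assoc x 1 z := by rw [hone2]; exact h
    exact (lcancel _ _ _ h2).symm
  have a3 : ∀ x y : L, assoc x y 1 = 1 := by
    intro x y
    have h := hassoc x y 1
    rw [hone2 (x * y), hone2 y] at h
    have h2 : (x * y) * 1 = (x * y) * assoc x y 1 := by rw [hone2]; exact h
    exact (lcancel _ _ _ h2).symm
  -- invariance of the associator under central perturbations in each slot
  have inv1 : ∀ {n : L}, n ∈ Z → ∀ x y z : L, assoc (x * n) y z = assoc x y z := by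
    intro n hn x y z
    have E1 : ((x * n) * y) * z = (x * (y * z)) * (n * assoc (x * n) y z) := by
      calc ((x * n) * y) * z = ((x * n) * (y * z)) * assoc (x * n) y z := hassoc (x * n) y z
        _ = ((x * (y * z)) * n) * assoc (x * n) y z := by rw [m1 hn x (y * z)]
        _ = (x * (y * z)) * (n * assoc (x * n) y z) := (z2 hn _ _).symm
    have E2 : ((x * n) * y) * z = (x * (y * z)) * (n * assoc x y z) := by
      calc ((x * n) * y) * z = ((x * y) * n) * z := by rw [m1 hn x y]
        _ = ((x * y) * z) * n := m1 hn (x * y) z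
        _ = ((x * (y * z)) * assoc x y z) * n := by rw [hassoc x y z]
        _ = (x * (y * z)) * (assoc x y z * n) := (z2 (ha x y z) _ _).symm
        _ = (x * (y * z)) * (n * assoc x y z) := by rw [zc (ha x y z) n]
    exact lcancel n _ _ (lcancel _ _ _ (E1.symm.trans E2))
  have inv2 : ∀ {n : L}, n ∈ Z → ∀ x y z : L, assoc x (y * n) z = assoc x y z := by
    intro n hn x y z
    have E1 : (x * (y * n)) * z = (x * (y * z)) * (n * assoc x (y * n) z) := by
      calc (x * (y * n)) * z = (x * ((y * n) * z)) * assoc x (y * n) z := hassoc x (y * n) z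
        _ = (x * ((y * z) * n)) * assoc x (y * n) z := by rw [m1 hn y z]
        _ = ((x * (y * z)) * n) * assoc x (y * n) z := by rw [m2 hn x (y * z)]
        _ = (x * (y * z)) * (n * assoc x (y * n) z) := (z2 hn _ _).symm
    have E2 : (x * (y * n)) * z = (x * (y * z)) * (n * assoc x y z) := by
      calc (x * (y * n)) * z = ((x * y) * n) * z := by rw [m2 hn x y]
        _ = ((x * y) * z) * n := m1 hn (x * y) z
        _ = ((x * (y * z)) * assoc x y z) * n := by rw [hassoc x y z]
        _ = (x * (y * z)) * (assoc x y z * n) := (z2 (ha x y z) _ _).symm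
        _ = (x * (y * z)) * (n * assoc x y z) := by rw [zc (ha x y z) n]
    exact lcancel n _ _ (lcancel _ _ _ (E1.symm.trans E2))
  have inv3 : ∀ {n : L}, n ∈ Z → ∀ x y z : L, assoc x y (z * n) = assoc x y z := by
    intro n hn x y z
    have E1 : (x * y) * (z * n) = (x * (y * z)) * (n * assoc x y (z * n)) := by
      calc (x * y) * (z * n) = (x * (y * (z * n))) * assoc x y (z * n) := hassoc x y (z * n)
        _ = (x * ((y * z) * n)) * assoc x y (z * n) := by rw [m2 hn y z]
        _ = ((x * (y * z)) * n) * assoc x y (z * n) := by rw [m2 hn x (y * z)]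
        _ = (x * (y * z)) * (n * assoc x y (z * n)) := (z2 hn _ _).symm
    have E2 : (x * y) * (z * n) = (x * (y * z)) * (n * assoc x y z) := by
      calc (x * y) * (z * n) = ((x * y) * z) * n := m2 hn (x * y) z
        _ = ((x * (y * z)) * assoc x y z) * n := by rw [hassoc x y z]
        _ = (x * (y * z)) * (assoc x y z * n) := (z2 (ha x y z) _ _).symm
        _ = (x * (y * z)) * (n * assoc x y z) := by rw [zc (ha x y z) n]
    exact lcancel n _ _ (lcancel _ _ _ (E1.symm.trans E2))
  -- associator with a central argument is trivial
  have aZ1 : ∀ {n : L}, n ∈ Z → ∀ y z : L, assoc n y z = 1 := by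
    intro n hn y z
    have h : assoc n y z = assoc (1 * n) y z := by rw [hone1 n]
    rw [h, inv1 hn 1 y z, a1]
  have aZ2 : ∀ {n : L}, n ∈ Z → ∀ x z : L, assoc x n z = 1 := by
    intro n hn x z
    have h : assoc x n z = assoc x (1 * n) z := by rw [hone1 n]
    rw [h, inv2 hn x 1 z, a2]
  have aZ3 : ∀ {n : L}, n ∈ Z → ∀ x y : L, assoc x y n = 1 := by
    intro n hn x y
    have h : assoc x y n = assoc x y (1 * n) := by rw [hone1 n]
    rw [h, inv3 hn x y 1, a3]
  -- pentagon identity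
  have pent : ∀ x y z w : L,
      assoc x y (z * w) * assoc (x * y) z w
        = (assoc y z w * assoc x (y * z) w) * assoc x y z := by
    intro x y z w
    have E1 : ((x * y) * z) * w
        = (x * (y * (z * w))) * (assoc x y (z * w) * assoc (x * y) z w) := by
      calc ((x * y) * z) * w = ((x * y) * (z * w)) * assoc (x * y) z w := hassoc (x * y) z w
        _ = ((x * (y * (z * w))) * assoc x y (z * w)) * assoc (x * y) z w := by
            rw [hassoc x y (z * w)]
        _ = (x * (y * (z * w))) * (assoc x y (z * w) * assoc (x * y) z w) :=
            (m2 (ha (x * y) z w) _ _).symm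
    have E2 : ((x * y) * z) * w
        = (x * (y * (z * w))) * ((assoc y z w * assoc x (y * z) w) * assoc x y z) := by
      calc ((x * y) * z) * w = ((x * (y * z)) * assoc x y z) * w := by rw [hassoc x y z]
        _ = ((x * (y * z)) * w) * assoc x y z := m1 (ha x y z) _ w
        _ = ((x * ((y * z) * w)) * assoc x (y * z) w) * assoc x y z := by
            rw [hassoc x (y * z) w]
        _ = ((x * ((y * (z * w)) * assoc y z w)) * assoc x (y * z) w) * assoc x y z := by
            rw [hassoc y z w]
        _ = (((x * (y * (z * w))) * assoc y z w) * assoc x (y * z) w) * assoc x y z := by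
            rw [m2 (ha y z w) x (y * (z * w))]
        _ = ((x * (y * (z * w))) * (assoc y z w * assoc x (y * z) w)) * assoc x y z := by
            rw [← m2 (ha x (y * z) w) (x * (y * (z * w))) (assoc y z w)]
        _ = (x * (y * (z * w))) * ((assoc y z w * assoc x (y * z) w) * assoc x y z) :=
            (m2 (ha x y z) _ _).symm
    exact lcancel _ _ _ (E1.symm.trans E2)
  -- the Moufang identity in associator form
  have moueq : ∀ x y z : L, assoc x y (z * x) = assoc y z x * assoc x (y * z) x := by
    intro x y z
    have E1 : (x * y) * (z * x) = (x * (y * (z * x))) * assoc x y (z * x) := hassoc x y (z * x)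
    have E2 : (x * (y * z)) * x
        = (x * (y * (z * x))) * (assoc y z x * assoc x (y * z) x) := by
      calc (x * (y * z)) * x = (x * ((y * z) * x)) * assoc x (y * z) x := hassoc x (y * z) x
        _ = (x * ((y * (z * x)) * assoc y z x)) * assoc x (y * z) x := by rw [hassoc y z x]
        _ = ((x * (y * (z * x))) * assoc y z x) * assoc x (y * z) x := by
            rw [m2 (ha y z x) x (y * (z * x))]
        _ = (x * (y * (z * x))) * (assoc y z x * assoc x (y * z) x) :=
            (m2 (ha x (y * z) x) _ _).symm
    exact lcancel _ _ _ (E1.symm.trans ((hmo x y z).trans E2))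
  -- flexibility: assoc x z x = 1
  have axzx : ∀ x z : L, assoc x z x = 1 := by
    intro x z
    have h := moueq x 1 z
    rw [a2 x (z * x), a1 z x, hone1 z, hone1 (assoc x z x)] at h
    exact h.symm
  -- simplified Moufang
  have mou' : ∀ x y z : L, assoc x y (z * x) = assoc y z x := by
    intro x y z
    rw [moueq x y z, axzx x (y * z), hone2]
  -- substitution form of Moufang
  have sub8 : ∀ x y z : L, assoc x y z = assoc y (z * x) x := by
    intro x y z
    obtain ⟨w, hw, _⟩ := hr x z
    have h1 : assoc x y z = assoc y w x := by rw [← hw, mou' x y w]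
    have hzx : z * x = w * ((x * x) * assoc w x x) := by
      calc z * x = (w * x) * x := by rw [hw]
        _ = (w * (x * x)) * assoc w x x := hassoc w x x
        _ = w * ((x * x) * assoc w x x) := (m2 (ha w x x) w (x * x)).symm
    have hN : (x * x) * assoc w x x ∈ Z := hZmul _ (hsq x) _ (ha w x x)
    rw [h1, ← inv2 hN y w x, ← hzx]
  -- S1 : assoc (x*y) z x = assoc x y z
  have s1 : ∀ x y z : L, assoc (x * y) z x = assoc x y z := by
    intro x y z
    have h := pent x y z x
    rw [mou' x y z, axzx x (y * z), hone2] at h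
    exact lcancel _ _ _ h
  have axxz : ∀ x z : L, assoc x x z = 1 := by
    intro x z
    have h := s1 x x z
    rw [aZ1 (hsq x) z x] at h
    exact h.symm
  have azxx : ∀ u x : L, assoc u x x = 1 := by
    intro u x
    obtain ⟨y, hy, _⟩ := hl x u
    have h := s1 x y x
    rw [hy, axzx x y] at h
    exact h
  -- commutator variant
  have hcomm' : ∀ x y : L, x * y = y * (x * comm x y) := by
    intro x y
    calc x * y = (y * x) * comm x y := hcomm x y
      _ = y * (x * comm x y) := (m2 (hc x y) y x).symm
  have s1' : ∀ x y z : L, assoc (x * y) z y = assoc y x z := by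
    intro x y z
    rw [hcomm' x y, s1 y (x * comm x y) z, inv2 (hc x y) y x z]
  have sub8' : ∀ x y z : L, assoc x (y * z) y = assoc y x z := by
    intro x y z
    rw [hcomm y z, inv2 (hc y z) x (z * y) y, ← sub8 y x z]
  -- shift identities
  have t1 : ∀ x y z : L, assoc x y (z * y) = assoc x y z := by
    intro x y z
    have h := pent x y z y
    rw [s1' x y z, axzx y z, hone1, sub8' x y z] at h
    rw [zc (ha y x z) (assoc x y z)] at h
    exact rcancel _ _ _ h
  have t1' : ∀ x y z : L, assoc x y (y * z) = assoc x y z := by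
    intro x y z
    rw [hcomm y z, inv3 (hc y z) x y (z * y), t1 x y z]
  have axyy : ∀ x y : L, assoc x y y = 1 := by
    intro x y
    have h := t1 x y 1
    rw [hone1 y, a3 x y] at h
    exact h
  have t2 : ∀ x y w : L, assoc (x * y) y w = assoc x y w := by
    intro x y w
    have h := pent x y y w
    rw [t1' x y w, axxz y w, hone1, aZ2 (hsq y) x w, hone1, axyy x y] at h
    exact (zuv _ (ha x y w) _ (ha (x * y) y w) h).symm
  have t3 : ∀ x y z : L, assoc x (y * z) z = assoc x y z := by
    intro x y z
    have h := pent x y z z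
    rw [aZ3 (hsq z) x y, hone1, azxx (x * y) z, azxx y z, hone1] at h
    exact zuv _ (ha x (y * z) z) _ (ha x y z) h.symm
  have t4 : ∀ x z w : L, assoc x (x * z) w = assoc x z w := by
    intro x z w
    have h := pent x x z w
    rw [axxz x (z * w), aZ1 (hsq x) z w, hone1, axxz x z, hone2] at h
    exact (zuv _ (ha x z w) _ (ha x (x * z) w) h.symm).symm
  -- cyclic symmetry
  have cyc : ∀ x y z : L, assoc x y z = assoc y z x := by
    intro x y z
    exact (sub8 x y z).trans (t3 y z x)
  -- transposition symmetry
  have swap12 : ∀ x y z : L, assoc x y z = assoc y x z := by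
    intro x y z
    have hxy : (x * y) * y = x * (y * y) := by rw [hassoc x y y, axyy, hone2]
    have h2 : assoc (x * y) x z = assoc (x * y) y z := by
      calc assoc (x * y) x z = assoc (x * y) (x * (y * y)) z :=
            (inv2 (hsq y) (x * y) x z).symm
        _ = assoc (x * y) ((x * y) * y) z := by rw [hxy]
        _ = assoc (x * y) y z := t4 (x * y) y z
    have h3 : assoc (x * y) x z = assoc (y * x) x z := by
      rw [hcomm x y, inv1 (hc x y) (y * x) x z]
    calc assoc x y z = assoc (x * y) y z := (t2 x y z).symm
      _ = assoc (x * y) x z := h2.symm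
      _ = assoc (y * x) x z := h3
      _ = assoc y x z := t2 y x z
  have swap23 : ∀ x y z : L, assoc x y z = assoc x z y := by
    intro x y z
    exact (cyc x y z).trans ((cyc y z x).trans (swap12 z x y))
  -- key: additivity in the third slot
  have key : ∀ x y z w : L, assoc x y (z * w) = assoc x y z * assoc x y w := by
    intro x y z w
    have I0 := pent x y z w
    rw [show assoc (x * y) z w = assoc z w (x * y) from cyc (x * y) z w] at I0
    have II0 := pent y z w x
    rw [show assoc (y * z) w x = assoc x (y * z) w from
          (cyc (y * z) w x).trans ((swap12 w x (y * z)).trans (swap23 x w (y * z))),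
        show assoc z w x = assoc x z w from (cyc z w x).trans (cyc w x z),
        show assoc y (z * w) x = assoc x y (z * w) from
          (cyc y (z * w) x).trans (cyc (z * w) x y)] at II0
    have III0 := pent z w x y
    rw [show assoc (z * w) x y = assoc x y (z * w) from cyc (z * w) x y,
        show assoc w x y = assoc x y w from cyc w x y,
        show assoc z (w * x) y = assoc y z (w * x) from
          (cyc z (w * x) y).trans (cyc (w * x) y z),
        show assoc z w x = assoc x z w from (cyc z w x).trans (cyc w x z)] at III0
    rcases hZ2 _ (ha x y z) with hp | hp <;>
    rcases hZ2 _ (ha y z w) with hq | hq <;>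
    rcases hZ2 _ (ha x z w) with hrr | hrr <;>
    rcases hZ2 _ (ha x y w) with hs | hs <;>
    rcases hZ2 _ (ha x y (z * w)) with ht | ht <;>
    rcases hZ2 _ (ha x (y * z) w) with hu | hu <;>
    rcases hZ2 _ (ha y z (w * x)) with hv | hv <;>
    rcases hZ2 _ (ha z w (x * y)) with hg | hg <;>
    simp only [hp, hq, hrr, hs, ht, hu, hv, hg, hone1, hone2, hee] at I0 II0 III0 ⊢ <;>
    first
      | rfl
      | exact absurd I0 hne
      | exact absurd II0 hne
      | exact absurd III0 hne
      | exact absurd I0.symm hne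
      | exact absurd II0.symm hne
      | exact absurd III0.symm hne
  intro x w y z
  refine ⟨?_, ?_, ?_⟩
  · calc assoc (x * w) y z = assoc y z (x * w) := cyc (x * w) y z
      _ = assoc y z x * assoc y z w := key y z x w
      _ = assoc x y z * assoc w y z := by
          rw [show assoc y z x = assoc x y z from (cyc x y z).symm,
              show assoc y z w = assoc w y z from (cyc w y z).symm]
  · calc assoc x (y * w) z = assoc x z (y * w) := swap23 x (y * w) z
      _ = assoc x z y * assoc x z w := key x z y w
      _ = assoc x y z * assoc x w z := by
          rw [show assoc x z y = assoc x y z from (swap23 x y z).symm,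
              show assoc x z w = assoc x w z from (swap23 x w z).symm]
  · exact key x y z w
end
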